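/- Let V be a ℚ-vector space of dimension r ≥ 1, V_ℝ = V ⊗ ℝ, and let α_1,…,α_r ∈ Hom(V,ℚ) be linearly independent linear functionals (extended to V_ℝ). Let C = {v ∈ V_ℝ : α_1(v) > 0, …, α_r(v) > 0} and let Σ ⊂ V be a lattice, i.e. a finitely generated subgroup which spans V over ℚ. Then there exist a finite subset S ⊂ Σ and elements a_1,…,a_r ∈ Σ such that C ∩ Σ is exactly the set of all vectors of the form v = v_0 + k_1·a_1 + … + k_r·a_r with v_0 ∈ S and k_1,…,k_r ∈ ℕ_0, and moreover v_0 and k_1,…,k_r are uniquely determined by v. -/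

import Mathlib

open Module Submodule

/-- Clearing denominators: a rational span member has a positive multiple in the subgroup. -/
private lemma aux_clear_denom {V : Type*} [AddCommGroup V] [Module ℚ V]
    (A : AddSubgroup V) (x : V) (hx : x ∈ Submodule.span ℚ (A : Set V)) :
    ∃ n : ℕ, 0 < n ∧ (n : ℚ) • x ∈ A := by
  obtain ⟨c, hc, rfl⟩ := mem_span_set.mp hx
  refine ⟨∏ a ∈ c.support, (c a).den, Finset.prod_pos fun a _ => (c a).pos, ?_⟩
  rw [Finsupp.smul_sum]
  refine AddSubgroup.sum_mem A fun a ha => ?_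
  show ((∏ a ∈ c.support, (c a).den : ℕ) : ℚ) • (c a • a) ∈ A
  obtain ⟨m, hm⟩ := Finset.dvd_prod_of_mem (fun a => (c a).den) ha
  have key : ((∏ a ∈ c.support, (c a).den : ℕ) : ℚ) • (c a • a)
      = ((m * (c a).num : ℤ) : ℚ) • a := by
    rw [smul_smul]
    congr 1
    rw [hm]
    push_cast
    rw [mul_comm ((c a).den : ℚ) (m : ℚ), mul_assoc, Rat.den_mul_eq_num]
  rw [key, Int.cast_smul_eq_zsmul]
  exact AddSubgroup.zsmul_mem A (hc ha) _

/-- Let `V` be a `ℚ`-vector space of dimension `r ≥ 1` and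
`α_1, …, α_r` linearly independent functionals on `V`, defining the sharp open cone
`C = {v : α_i(v) > 0 ∀ i}`.  For any lattice `Σ ⊆ V` (finitely generated subgroup
spanning `V`), there are a finite set `S ⊆ Σ` and `a_1, …, a_r ∈ Σ` such that the
lattice points of `C` are exactly the `v = v₀ + k₁a₁ + … + k_ra_r` with `v₀ ∈ S`,
`k_i ∈ ℕ`, the representation being unique. -/
theorem cone_lattice_point_decomposition
    (V : Type*) [AddCommGroup V] [Module ℚ V] [FiniteDimensional ℚ V]
    (r : ℕ) (hr : 1 ≤ r) (hdim : Module.finrank ℚ V = r)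
    (α : Fin r → (V →ₗ[ℚ] ℚ)) (hα : LinearIndependent ℚ α)
    (L : AddSubgroup V) (hfg : L.FG) (hspan : Submodule.span ℚ (L : Set V) = ⊤) :
    ∃ S : Finset V, (∀ s ∈ S, s ∈ L) ∧
      ∃ a : Fin r → V, (∀ i, a i ∈ L) ∧
        ∀ v : V, (v ∈ L ∧ ∀ i, 0 < α i v) ↔
          ∃! w : V × (Fin r → ℕ), w.1 ∈ S ∧ v = w.1 + ∑ i, w.2 i • a i := by
  classical
  -- the functionals separate points
  have hsep : ∀ v : V, (∀ i, α i v = 0) → v = 0 := by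
    intro v hv
    have hspanα : Submodule.span ℚ (Set.range α) = ⊤ :=
      hα.span_eq_top_of_card_eq_finrank'
        (by rw [Subspace.dual_finrank_eq, hdim, Fintype.card_fin])
    rw [← Module.forall_dual_apply_eq_zero_iff ℚ]
    intro f
    have hf : f ∈ Submodule.span ℚ (Set.range α) := hspanα ▸ Submodule.mem_top
    induction hf using Submodule.span_induction with
    | mem g hg => obtain ⟨i, rfl⟩ := hg; exact hv i
    | zero => rfl
    | add g h _ _ hg hh => simp [hg, hh]
    | smul q g _ hg => simp [hg]
  -- the evaluation map is bijective
  set φ : V →ₗ[ℚ] (Fin r → ℚ) := LinearMap.pi α with hφ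
  have hφinj : Function.Injective φ := by
    rw [← LinearMap.ker_eq_bot, LinearMap.ker_eq_bot']
    intro v hv
    exact hsep v fun i => congrFun hv i
  have hφsurj : Function.Surjective φ := by
    rw [← LinearMap.range_eq_top]
    apply Submodule.eq_top_of_finrank_eq
    rw [LinearMap.finrank_range_of_inj hφinj, hdim, Module.finrank_pi, Fintype.card_fin]
  -- pull back the standard basis vectors
  have hb : ∀ i : Fin r, ∃ b : V, ∀ j, α j b = if i = j then 1 else 0 := by
    intro i
    obtain ⟨b, hbb⟩ := hφsurj (Pi.single i 1)
    exact ⟨b, fun j => by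
      have := congrFun hbb j
      simpa [hφ, LinearMap.pi_apply, Pi.single_apply, eq_comm] using this⟩
  choose b hbα using hb
  -- scale into the lattice
  have hbL : ∀ i, ∃ n : ℕ, 0 < n ∧ (n : ℚ) • b i ∈ L :=
    fun i => aux_clear_denom L (b i) (by rw [hspan]; trivial)
  choose n hnpos hnL using hbL
  set d : Fin r → ℚ := fun i => (n i : ℚ) with hd
  have hdpos : ∀ i, 0 < d i := fun i => by simp only [hd]; exact_mod_cast hnpos i
  set a : Fin r → V := fun i => (n i : ℚ) • b i with ha
  have haL : ∀ i, a i ∈ L := hnL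
  have hαa : ∀ i j, α j (a i) = if i = j then d i else 0 := by
    intro i j
    simp only [ha, map_smul, smul_eq_mul, hbα]
    split <;> simp [hd]
  -- evaluating sums
  have hsum : ∀ (k : Fin r → ℕ) (j : Fin r),
      α j (∑ i, k i • a i) = (k j : ℚ) * d j := by
    intro k j
    rw [map_sum]
    rw [Finset.sum_eq_single j]
    · rw [map_nsmul, hαa, if_pos rfl, nsmul_eq_mul]
    · intro i _ hij
      rw [map_nsmul, hαa, if_neg hij, smul_zero]
    · simp
  -- common denominator for the lattice
  obtain ⟨T, hT⟩ := hfg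
  set M : ℕ := ∏ t ∈ T, ∏ i, (α i t).den with hM
  have hMpos : 0 < M := Finset.prod_pos fun t _ => Finset.prod_pos fun i _ => (α i t).pos
  have hML : ∀ s ∈ L, ∀ i, ∃ z : ℤ, (M : ℚ) * α i s = z := by
    intro s hs
    rw [← hT] at hs
    induction hs using AddSubgroup.closure_induction with
    | mem t ht =>
      intro i
      have hdvd : (α i t).den ∣ M := by
        refine dvd_trans (Finset.dvd_prod_of_mem (fun j => (α j t).den) (Finset.mem_univ i)) ?_
        exact Finset.dvd_prod_of_mem (fun t => ∏ i, (α i t).den) ht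
      obtain ⟨m, hm⟩ := hdvd
      refine ⟨m * (α i t).num, ?_⟩
      rw [hm]
      push_cast
      rw [mul_comm ((α i t).den : ℚ) (m : ℚ), mul_assoc, Rat.den_mul_eq_num]
    | zero => exact fun i => ⟨0, by simp⟩
    | add x y hx hy ihx ihy =>
      intro i
      obtain ⟨z1, hz1⟩ := ihx i
      obtain ⟨z2, hz2⟩ := ihy i
      exact ⟨z1 + z2, by rw [map_add, mul_add, hz1, hz2]; push_cast; ring⟩
    | neg x hx ihx =>
      intro i
      obtain ⟨z, hz⟩ := ihx i
      exact ⟨-z, by rw [map_neg, mul_neg, hz]; push_cast; ring⟩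
  -- the fundamental domain is finite
  set S0 : Set V := {s | s ∈ L ∧ ∀ i, 0 < α i s ∧ α i s ≤ d i} with hS0
  have hS0fin : S0.Finite := by
    set F : V → (Fin r → ℤ) := fun s i => ((M : ℚ) * α i s).num with hF
    have hFval : ∀ s ∈ S0, ∀ i, ((F s i : ℤ) : ℚ) = (M : ℚ) * α i s := by
      intro s hs i
      obtain ⟨z, hz⟩ := hML s hs.1 i
      rw [hF]
      simp only [hz, Rat.num_intCast]
    have hinj : Set.InjOn F S0 := by
      intro s hs s' hs' hss
      have : ∀ i, α i s = α i s' := by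
        intro i
        have h1 := hFval s hs i
        have h2 := hFval s' hs' i
        rw [hss] at h1
        have := h1.symm.trans h2
        have hM0 : (M : ℚ) ≠ 0 := by positivity
        exact mul_left_cancel₀ hM0 this
      have : s - s' = 0 := hsep _ (fun i => by rw [map_sub, this i, sub_self])
      exact sub_eq_zero.mp this
    have himg : F '' S0 ⊆ Set.pi Set.univ (fun i => Set.Icc 1 ⌈(M : ℚ) * d i⌉) := by
      rintro _ ⟨s, hs, rfl⟩ i _
      have hv := hFval s hs i
      constructor
      · have : (0 : ℚ) < (F s i : ℚ) := by
          rw [hv]; exact mul_pos (by positivity) (hs.2 i).1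
        exact_mod_cast this
      · have h1 : ((F s i : ℤ) : ℚ) ≤ (M : ℚ) * d i := by
          rw [hv]
          exact mul_le_mul_of_nonneg_left (hs.2 i).2 (by positivity)
        exact_mod_cast h1.trans (Int.le_ceil _)
    exact Set.Finite.of_finite_image
      ((Set.Finite.pi fun i => Set.finite_Icc _ _).subset himg) hinj
  refine ⟨hS0fin.toFinset, ?_, a, haL, ?_⟩
  · intro s hs
    rw [Set.Finite.mem_toFinset] at hs
    exact hs.1
  intro v
  constructor
  · rintro ⟨hvL, hvpos⟩
    set k : Fin r → ℕ := fun i => (⌈α i v / d i⌉ - 1).toNat with hk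
    have hkcast : ∀ i, (k i : ℤ) = ⌈α i v / d i⌉ - 1 := by
      intro i
      rw [hk, Int.toNat_of_nonneg]
      have : 0 < ⌈α i v / d i⌉ := Int.ceil_pos.mpr (div_pos (hvpos i) (hdpos i))
      omega
    have hklt : ∀ i, (k i : ℚ) * d i < α i v := by
      intro i
      have h1 : (k i : ℚ) < α i v / d i := by
        have := Int.ceil_lt_add_one (α i v / d i)
        have hc : ((k i : ℤ) : ℚ) = (⌈α i v / d i⌉ : ℚ) - 1 := by
          rw [hkcast i]; push_cast; ring
        rw [show ((k i : ℕ) : ℚ) = ((k i : ℤ) : ℚ) by push_cast; rfl, hc]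
        linarith
      calc (k i : ℚ) * d i < (α i v / d i) * d i :=
            mul_lt_mul_of_pos_right h1 (hdpos i)
        _ = α i v := div_mul_cancel₀ _ (hdpos i).ne'
    have hkle : ∀ i, α i v ≤ ((k i : ℚ) + 1) * d i := by
      intro i
      have h1 : α i v / d i ≤ (k i : ℚ) + 1 := by
        have := Int.le_ceil (α i v / d i)
        have hc : ((k i : ℤ) : ℚ) + 1 = (⌈α i v / d i⌉ : ℚ) := by
          rw [hkcast i]; push_cast; ring
        rw [show ((k i : ℕ) : ℚ) = ((k i : ℤ) : ℚ) by push_cast; rfl, hc]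
        linarith
      calc α i v = (α i v / d i) * d i := (div_mul_cancel₀ _ (hdpos i).ne').symm
        _ ≤ ((k i : ℚ) + 1) * d i := mul_le_mul_of_nonneg_right h1 (hdpos i).le
    set v₀ : V := v - ∑ i, k i • a i with hv₀
    have hv₀α : ∀ j, α j v₀ = α j v - (k j : ℚ) * d j := by
      intro j
      rw [hv₀, map_sub, hsum]
    have hv₀S : v₀ ∈ S0 := by
      refine ⟨AddSubgroup.sub_mem L hvL
        (AddSubgroup.sum_mem L fun i _ => AddSubgroup.nsmul_mem L (haL i) _), ?_⟩
      intro i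
      rw [hv₀α i]
      constructor
      · linarith [hklt i]
      · have h := hkle i
        have he : ((k i : ℚ) + 1) * d i = (k i : ℚ) * d i + d i := by ring
        linarith
    refine ⟨(v₀, k), ⟨Set.Finite.mem_toFinset _ |>.mpr hv₀S, ?_⟩, ?_⟩
    · show v = v₀ + ∑ i, k i • a i
      rw [hv₀]; abel
    rintro ⟨w₀, m⟩ ⟨hw₀S, hweq⟩
    rw [Set.Finite.mem_toFinset] at hw₀S
    -- bounds for the m-representation
    have hweq' : v = w₀ + ∑ i, m i • a i := hweq
    have hmb : ∀ j, (m j : ℚ) * d j < α j v ∧ α j v ≤ ((m j : ℚ) + 1) * d j := by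
      intro j
      have hαv : α j v = α j w₀ + (m j : ℚ) * d j := by
        rw [hweq', map_add, hsum]
      obtain ⟨h1, h2⟩ := hw₀S.2 j
      have he : ((m j : ℚ) + 1) * d j = d j + (m j : ℚ) * d j := by ring
      constructor
      · linarith
      · linarith
    have hmk : m = k := by
      funext j
      obtain ⟨h1, h2⟩ := hmb j
      have h3 := hklt j
      have h4 := hkle j
      have hd := hdpos j
      have e1 : (m j : ℚ) < (k j : ℚ) + 1 := (mul_lt_mul_iff_of_pos_right hd).mp (by linarith)
      have e2 : (k j : ℚ) < (m j : ℚ) + 1 := (mul_lt_mul_iff_of_pos_right hd).mp (by linarith)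
      have : m j < k j + 1 := by exact_mod_cast e1
      have : k j < m j + 1 := by exact_mod_cast e2
      omega
    have hw₀ : w₀ = v₀ := by
      rw [hv₀]
      rw [hmk] at hweq'
      rw [hweq']
      abel
    exact Prod.ext hw₀ hmk
  · rintro ⟨⟨w₀, m⟩, ⟨hw₀S, hweq⟩, -⟩
    rw [Set.Finite.mem_toFinset] at hw₀S
    have hweq' : v = w₀ + ∑ i, m i • a i := hweq
    constructor
    · rw [hweq']
      exact AddSubgroup.add_mem L hw₀S.1
        (AddSubgroup.sum_mem L fun i _ => AddSubgroup.nsmul_mem L (haL i) _)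
    · intro i
      have : α i v = α i w₀ + (m i : ℚ) * d i := by rw [hweq', map_add, hsum]
      have h1 := (hw₀S.2 i).1
      have h2 : (0 : ℚ) ≤ (m i : ℚ) * d i :=
        mul_nonneg (by positivity) (hdpos i).le
      linarith
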